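/- arXiv:2102.05854 — 4 statements merged into one kernel-verified Lean document; each statement's English description precedes it below -/
import Mathlib

section
/- Consider a finite set J of items assigned to k machines with capacities M_1,…,M_k (so J is partitioned as J = J_1 ∪ … ∪ J_k with Σ_{i∈J_j} s_j(i) ≤ M_j), and d global weight constraints Σ_{i∈J} w_q(i) ≤ W_q for q ∈ [d], where all sizes, weights and capacities are nonnegative reals, and each item has a nonnegative profit. Then for every ε with 0 < ε < 1, there exist subsets X, Y ⊆ J with |X| ≤ (d+k)/ε², p(Y) ≤ ε·p(J), and such that: for all j ∈ [k] and all i ∈ J_j ∖ (X ∪ Y), s_j(i) ≤ ε·(M_j − s_j(X ∩ J_j)); and for all q ∈ [d] and all i ∈ J ∖ (X ∪ Y), w_q(i) ≤ ε·(W_q − w_q(X)). -/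
open Finset
open scoped Classical

noncomputable def vmgBig (k d : ℕ) (ε : ℝ) (J : Finset ℕ) (Jm : Fin k → Finset ℕ)
    (s : Fin k → ℕ → ℝ) (w : Fin d → ℕ → ℝ) (M : Fin k → ℝ) (W : Fin d → ℝ)
    (X : Finset ℕ) : Finset ℕ :=
  J.filter (fun i =>
    (∃ j, i ∈ Jm j ∧ ε * (M j - ∑ i' ∈ X ∩ Jm j, s j i') < s j i) ∨
    (∃ q, ε * (W q - ∑ i' ∈ X, w q i') < w q i))

noncomputable def vmgX (k d : ℕ) (ε : ℝ) (J : Finset ℕ) (Jm : Fin k → Finset ℕ)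
    (s : Fin k → ℕ → ℝ) (w : Fin d → ℕ → ℝ) (M : Fin k → ℝ) (W : Fin d → ℝ) :
    ℕ → Finset ℕ
  | 0 => ∅
  | t+1 => vmgX k d ε J Jm s w M W t ∪
      vmgBig k d ε J Jm s w M W (vmgX k d ε J Jm s w M W t)

lemma vmg_count (ε R : ℝ) (hε : 0 < ε) (A : Finset ℕ) (f : ℕ → ℝ)
    (hf : ∀ i ∈ A, 0 ≤ f i) (hsum : ∑ i ∈ A, f i ≤ R) :
    ((A.filter (fun i => ε * R < f i)).card : ℝ) ≤ 1 / ε := by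
  rcases (A.filter (fun i => ε * R < f i)).eq_empty_or_nonempty with h | ⟨i0, hi0⟩
  · rw [h]; simp; positivity
  · obtain ⟨hi0A, hbig⟩ := mem_filter.mp hi0
    have hR0 : 0 ≤ R := le_trans (sum_nonneg hf) hsum
    have hfi0 : f i0 ≤ R := le_trans (single_le_sum hf hi0A) hsum
    have hRpos : 0 < R := by
      rcases lt_or_eq_of_le hR0 with h | h
      · exact h
      · exfalso; rw [← h] at hbig hfi0; simp at hbig; linarith
    have hcard : ((A.filter (fun i => ε * R < f i)).card : ℝ) * (ε * R) ≤
        ∑ i ∈ A.filter (fun i => ε * R < f i), f i := by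
      have := Finset.card_nsmul_le_sum (A.filter (fun i => ε * R < f i)) f (ε * R)
        (fun i hi => le_of_lt (mem_filter.mp hi).2)
      simpa [nsmul_eq_mul] using this
    have hsum2 : ∑ i ∈ A.filter (fun i => ε * R < f i), f i ≤ R :=
      le_trans (sum_le_sum_of_subset_of_nonneg (filter_subset _ _)
        (fun i hi _ => hf i hi)) hsum
    have hmul : ((A.filter (fun i => ε * R < f i)).card : ℝ) * (ε * R) ≤ R :=
      le_trans hcard hsum2
    rw [le_div_iff₀ hε]
    have := mul_le_mul_of_nonneg_right (le_refl (1 : ℝ)) hR0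
    nlinarith [hmul, hRpos]

/-- Structural theorem for Vector-Max-GAP: any feasible assignment decomposes into a
constant-size set X, a low-profit set Y, and remaining items that are ε-small relative to
residual capacities. -/
theorem stmt5 (k d : ℕ) (ε : ℝ) (hε : 0 < ε) (hε1 : ε < 1)
    (J : Finset ℕ) (Jm : Fin k → Finset ℕ)
    (hpart : ∀ i ∈ J, ∃! j, i ∈ Jm j) (hsub : ∀ j, Jm j ⊆ J)
    (s : Fin k → ℕ → ℝ) (w : Fin d → ℕ → ℝ) (p : ℕ → ℝ)
    (M : Fin k → ℝ) (W : Fin d → ℝ)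
    (hs : ∀ j i, 0 ≤ s j i) (hw : ∀ q i, 0 ≤ w q i) (hp : ∀ i, 0 ≤ p i)
    (hM : ∀ j, 0 ≤ M j) (hW : ∀ q, 0 ≤ W q)
    (hfeas : ∀ j, ∑ i ∈ Jm j, s j i ≤ M j)
    (hwfeas : ∀ q, ∑ i ∈ J, w q i ≤ W q) :
    ∃ X Y : Finset ℕ, X ⊆ J ∧ Y ⊆ J ∧
      ((X.card : ℝ) ≤ (d + k) / ε ^ 2) ∧
      (∑ i ∈ Y, p i ≤ ε * ∑ i ∈ J, p i) ∧
      (∀ j, ∀ i ∈ Jm j \ (X ∪ Y), s j i ≤ ε * (M j - ∑ i' ∈ X ∩ Jm j, s j i')) ∧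
      (∀ q, ∀ i ∈ J \ (X ∪ Y), w q i ≤ ε * (W q - ∑ i' ∈ X, w q i')) := by
  set big := vmgBig k d ε J Jm s w M W with hbigdef
  set Xs := vmgX k d ε J Jm s w M W with hXsdef
  have hXsucc : ∀ t, Xs (t+1) = Xs t ∪ big (Xs t) := fun t => rfl
  have hbigsub : ∀ X, big X ⊆ J := fun X => Finset.filter_subset _ _
  have hXsub : ∀ t, Xs t ⊆ J := by
    intro t
    induction t with
    | zero => intro i hi; simp [hXsdef, vmgX] at hi
    | succ n ih => rw [hXsucc]; exact union_subset ih (hbigsub _)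
  have hXmono : ∀ t, Xs t ⊆ Xs (t+1) := by
    intro t; rw [hXsucc]; exact subset_union_left
  -- card bound on new big items
  have hbigcard : ∀ X : Finset ℕ, X ⊆ J → ((big X \ X).card : ℝ) ≤ (↑d + ↑k) / ε := by
    intro X hX
    set F : Fin k → Finset ℕ := fun j => (Jm j \ X).filter
      (fun i => ε * (M j - ∑ i' ∈ X ∩ Jm j, s j i') < s j i) with hF
    set G : Fin d → Finset ℕ := fun q => (J \ X).filter
      (fun i => ε * (W q - ∑ i' ∈ X, w q i') < w q i) with hG
    have hcover : big X \ X ⊆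
        (Finset.univ.biUnion F) ∪ (Finset.univ.biUnion G) := by
      intro i hi
      obtain ⟨hi1, hiX⟩ := mem_sdiff.mp hi
      obtain ⟨hiJ, hcond⟩ := mem_filter.mp hi1
      rcases hcond with ⟨j, hij, hb⟩ | ⟨q, hb⟩
      · exact mem_union_left _ (mem_biUnion.mpr ⟨j, mem_univ _,
          mem_filter.mpr ⟨mem_sdiff.mpr ⟨hij, hiX⟩, hb⟩⟩)
      · exact mem_union_right _ (mem_biUnion.mpr ⟨q, mem_univ _,
          mem_filter.mpr ⟨mem_sdiff.mpr ⟨hiJ, hiX⟩, hb⟩⟩)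
    have hFc : ∀ j, ((F j).card : ℝ) ≤ 1 / ε := by
      intro j
      apply vmg_count ε _ hε _ _ (fun i _ => hs j i)
      have h1 := Finset.sum_inter_add_sum_sdiff (Jm j) X (s j)
      have h2 : ∑ i' ∈ X ∩ Jm j, s j i' = ∑ i' ∈ Jm j ∩ X, s j i' := by
        rw [inter_comm]
      have := hfeas j
      linarith
    have hGc : ∀ q, ((G q).card : ℝ) ≤ 1 / ε := by
      intro q
      apply vmg_count ε _ hε _ _ (fun i _ => hw q i)
      have h1 := Finset.sum_inter_add_sum_sdiff J X (w q)
      have h2 : J ∩ X = X := Finset.inter_eq_right.mpr hX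
      rw [h2] at h1
      have := hwfeas q
      linarith
    have hc1 : ((big X \ X).card : ℝ) ≤
        ((Finset.univ.biUnion F).card : ℝ) + ((Finset.univ.biUnion G).card : ℝ) := by
      have := Finset.card_le_card hcover
      have h2 := Finset.card_union_le (Finset.univ.biUnion F) (Finset.univ.biUnion G)
      exact_mod_cast le_trans this h2
    have hc2 : ((Finset.univ.biUnion F).card : ℝ) ≤ (k : ℝ) * (1 / ε) := by
      have h1 : ((Finset.univ.biUnion F).card : ℝ) ≤
          ∑ j : Fin k, ((F j).card : ℝ) := by
        exact_mod_cast Finset.card_biUnion_le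
      calc ((Finset.univ.biUnion F).card : ℝ) ≤ ∑ j : Fin k, ((F j).card : ℝ) := h1
        _ ≤ ∑ _j : Fin k, (1 / ε) := Finset.sum_le_sum (fun j _ => hFc j)
        _ = (k : ℝ) * (1 / ε) := by rw [Finset.sum_const, Finset.card_univ, Fintype.card_fin, nsmul_eq_mul]
    have hc3 : ((Finset.univ.biUnion G).card : ℝ) ≤ (d : ℝ) * (1 / ε) := by
      have h1 : ((Finset.univ.biUnion G).card : ℝ) ≤
          ∑ q : Fin d, ((G q).card : ℝ) := by
        exact_mod_cast Finset.card_biUnion_le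
      calc ((Finset.univ.biUnion G).card : ℝ) ≤ ∑ q : Fin d, ((G q).card : ℝ) := h1
        _ ≤ ∑ _q : Fin d, (1 / ε) := Finset.sum_le_sum (fun q _ => hGc q)
        _ = (d : ℝ) * (1 / ε) := by rw [Finset.sum_const, Finset.card_univ, Fintype.card_fin, nsmul_eq_mul]
    have : ((big X \ X).card : ℝ) ≤ (k : ℝ) * (1 / ε) + (d : ℝ) * (1 / ε) := by linarith
    calc ((big X \ X).card : ℝ) ≤ (k : ℝ) * (1 / ε) + (d : ℝ) * (1 / ε) := this
      _ = (↑d + ↑k) / ε := by field_simp; ring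
  have hXcard : ∀ t, ((Xs t).card : ℝ) ≤ (t : ℝ) * ((↑d + ↑k) / ε) := by
    intro t
    induction t with
    | zero => simp [hXsdef, vmgX]
    | succ n ih =>
      have h1 : Xs (n+1) = Xs n ∪ (big (Xs n) \ Xs n) := by
        rw [hXsucc, Finset.union_sdiff_self_eq_union]
      have h2 : ((Xs (n+1)).card : ℝ) ≤ ((Xs n).card : ℝ) + ((big (Xs n) \ Xs n).card : ℝ) := by
        rw [h1]; exact_mod_cast Finset.card_union_le _ _
      have h3 := hbigcard (Xs n) (hXsub n)
      push_cast
      push_cast at ih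
      nlinarith
  -- pigeonhole over profit
  set T := ⌈1 / ε⌉₊ with hT
  have hT0 : 0 < T := Nat.ceil_pos.mpr (by positivity)
  have hTle : 1 / ε ≤ (T : ℝ) := Nat.le_ceil _
  have hJp : 0 ≤ ∑ i ∈ J, p i := sum_nonneg (fun i _ => hp i)
  have htel : ∀ t, ∑ i ∈ Xs t, p i = ∑ u ∈ Finset.range t, ∑ i ∈ Xs (u+1) \ Xs u, p i := by
    intro t
    induction t with
    | zero => simp [hXsdef, vmgX]
    | succ n ih =>
      rw [Finset.sum_range_succ, ← ih]
      have h1 : Xs n ∪ (Xs (n+1) \ Xs n) = Xs (n+1) :=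
        Finset.union_sdiff_of_subset (hXmono n)
      rw [← h1, Finset.sum_union Finset.disjoint_sdiff, h1]
  have hsumle : ∑ u ∈ Finset.range T, ∑ i ∈ Xs (u+1) \ Xs u, p i ≤ ∑ i ∈ J, p i := by
    rw [← htel]
    exact sum_le_sum_of_subset_of_nonneg (hXsub T) (fun i _ _ => hp i)
  have hex : ∃ t ∈ Finset.range T, ∑ i ∈ Xs (t+1) \ Xs t, p i ≤ ε * ∑ i ∈ J, p i := by
    by_contra h
    push_neg at h
    have hlt : ∑ _u ∈ Finset.range T, (ε * ∑ i ∈ J, p i) <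
        ∑ u ∈ Finset.range T, ∑ i ∈ Xs (u+1) \ Xs u, p i :=
      Finset.sum_lt_sum_of_nonempty ⟨0, Finset.mem_range.mpr hT0⟩ h
    rw [Finset.sum_const, Finset.card_range, nsmul_eq_mul] at hlt
    have hTeps : 1 ≤ ε * (T : ℝ) := by
      rw [div_le_iff₀ hε] at hTle
      linarith [hTle]
    nlinarith [hlt, hsumle, hJp]
  obtain ⟨t, htT, hY⟩ := hex
  refine ⟨Xs t, Xs (t+1) \ Xs t, hXsub t, fun i hi => hXsub (t+1) (mem_sdiff.mp hi).1, ?_, hY, ?_, ?_⟩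
  · -- cardinality
    have ht' : (t : ℝ) < 1 / ε := by
      have h1 : t + 1 ≤ T := Finset.mem_range.mp htT
      have h2 : (T : ℝ) < 1 / ε + 1 := Nat.ceil_lt_add_one (by positivity)
      have h3 : (t : ℝ) + 1 ≤ (T : ℝ) := by exact_mod_cast h1
      linarith
    have h4 := hXcard t
    have h5 : (t : ℝ) * ((↑d + ↑k) / ε) ≤ (1 / ε) * ((↑d + ↑k) / ε) := by
      apply mul_le_mul_of_nonneg_right (le_of_lt ht')
      positivity
    have h6 : (1 / ε) * ((↑d + ↑k) / ε) = (↑d + ↑k) / ε ^ 2 := by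
      rw [div_mul_div_comm, one_mul, ← sq]
    linarith
  · -- machine smallness
    intro j i hi
    obtain ⟨hij, hiXY⟩ := mem_sdiff.mp hi
    by_contra hcon
    push_neg at hcon
    have hibig : i ∈ big (Xs t) := by
      apply mem_filter.mpr
      exact ⟨hsub j hij, Or.inl ⟨j, hij, hcon⟩⟩
    have hiX1 : i ∈ Xs (t+1) := by rw [hXsucc]; exact mem_union_right _ hibig
    apply hiXY
    by_cases hiX : i ∈ Xs t
    · exact mem_union_left _ hiX
    · exact mem_union_right _ (mem_sdiff.mpr ⟨hiX1, hiX⟩)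
  · -- weight smallness
    intro q i hi
    obtain ⟨hiJ, hiXY⟩ := mem_sdiff.mp hi
    by_contra hcon
    push_neg at hcon
    have hibig : i ∈ big (Xs t) := by
      apply mem_filter.mpr
      exact ⟨hiJ, Or.inr ⟨q, hcon⟩⟩
    have hiX1 : i ∈ Xs (t+1) := by rw [hXsucc]; exact mem_union_right _ hibig
    apply hiXY
    by_cases hiX : i ∈ Xs t
    · exact mem_union_left _ hiX
    · exact mem_union_right _ (mem_sdiff.mpr ⟨hiX1, hiX⟩)
end

section
/- Let W, H > 0 and 0 < ε < 1/2. Let S be a finite set of rectangles, each of width ≤ εW and height ≤ εH, with profits p : S → ℝ≥0. Sort S by nonincreasing profit density p(i)/area(i) and let T be the largest prefix with area(T) ≤ (1−ε)²·W·H. Then p(T) ≥ (1−2ε)·OPT, where OPT is the maximum profit of any subset of S whose rectangles can be packed interior-disjointly into the W × H bin. -/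
open MeasureTheory Set

lemma packed_area_le (W H : ℝ) (hW : 0 ≤ W) (hWH : 0 ≤ W * H)
    (S' : Finset ℕ) (w h x y : ℕ → ℝ)
    (hpos : ∀ i ∈ S', 0 < w i ∧ 0 < h i)
    (hin : ∀ i ∈ S', 0 ≤ x i ∧ x i + w i ≤ W ∧ 0 ≤ y i ∧ y i + h i ≤ H)
    (hdisj : ∀ i ∈ S', ∀ j ∈ S', i ≠ j → ∀ px py : ℝ,
      ¬(x i < px ∧ px < x i + w i ∧ y i < py ∧ py < y i + h i ∧
        x j < px ∧ px < x j + w j ∧ y j < py ∧ py < y j + h j)) :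
    ∑ i ∈ S', w i * h i ≤ W * H := by
  set R : ℕ → Set (ℝ × ℝ) := fun i => Ioo (x i) (x i + w i) ×ˢ Ioo (y i) (y i + h i) with hR
  have hmeas : ∀ i, MeasurableSet (R i) := fun i =>
    measurableSet_Ioo.prod measurableSet_Ioo
  have hpair : (S' : Set ℕ).PairwiseDisjoint R := by
    intro i hi j hj hij
    rw [Function.onFun, Set.disjoint_left]
    rintro ⟨px, py⟩ ⟨⟨h1, h2⟩, h3, h4⟩ ⟨⟨h5, h6⟩, h7, h8⟩
    exact hdisj i hi j hj hij px py ⟨h1, h2, h3, h4, h5, h6, h7, h8⟩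
  have hsub : ∀ i ∈ S', R i ⊆ Icc 0 W ×ˢ Icc 0 H := by
    intro i hi
    obtain ⟨hx0, hxW, hy0, hyH⟩ := hin i hi
    exact Set.prod_mono (Ioo_subset_Icc_self.trans (Icc_subset_Icc hx0 hxW))
      (Ioo_subset_Icc_self.trans (Icc_subset_Icc hy0 hyH))
  have key : ∑ i ∈ S', volume (R i) ≤ volume (Icc (0:ℝ) W ×ˢ Icc (0:ℝ) H) := by
    rw [← measure_biUnion_finset hpair (fun i _ => hmeas i)]
    exact measure_mono (Set.iUnion₂_subset hsub)
  have hvolR : ∀ i ∈ S', volume (R i) = ENNReal.ofReal (w i * h i) := by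
    intro i hi
    rw [hR]
    simp only [Measure.volume_eq_prod, Measure.prod_prod, Real.volume_Ioo]
    rw [← ENNReal.ofReal_mul (by linarith [(hpos i hi).1])]
    ring_nf
  have hvolB : volume (Icc (0:ℝ) W ×ˢ Icc (0:ℝ) H) = ENNReal.ofReal (W * H) := by
    simp only [Measure.volume_eq_prod, Measure.prod_prod, Real.volume_Icc]
    rw [← ENNReal.ofReal_mul (by linarith)]
    ring_nf
  rw [hvolB, Finset.sum_congr rfl hvolR] at key
  rw [← ENNReal.ofReal_sum_of_nonneg
    (fun i hi => mul_nonneg (hpos i hi).1.le (hpos i hi).2.le)] at key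
  exact (ENNReal.ofReal_le_ofReal_iff hWH).1 key


/-- NFDH greedy density prefix: if T is a maximal prefix by nonincreasing profit density
with area ≤ (1-ε)²WH, then p(T) ≥ (1-2ε)·OPT over all packable subsets. -/
theorem stmt8 (W H ε : ℝ) (hW : 0 < W) (hH : 0 < H) (hε : 0 < ε) (hε2 : ε < 1 / 2)
    (S : Finset ℕ) (w h p : ℕ → ℝ)
    (hwh : ∀ i ∈ S, 0 < w i ∧ w i ≤ ε * W ∧ 0 < h i ∧ h i ≤ ε * H)
    (hp : ∀ i ∈ S, 0 ≤ p i)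
    (T : Finset ℕ) (hTS : T ⊆ S)
    (hdens : ∀ i ∈ T, ∀ j ∈ S \ T, p j * (w i * h i) ≤ p i * (w j * h j))
    (harea : ∑ i ∈ T, w i * h i ≤ (1 - ε) ^ 2 * (W * H))
    (hmax : T = S ∨ ∃ j ∈ S \ T,
        (1 - ε) ^ 2 * (W * H) < (∑ i ∈ T, w i * h i) + w j * h j) :
    ∀ S' ⊆ S,
      (∃ x y : ℕ → ℝ,
        (∀ i ∈ S', 0 ≤ x i ∧ x i + w i ≤ W ∧ 0 ≤ y i ∧ y i + h i ≤ H) ∧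
        (∀ i ∈ S', ∀ j ∈ S', i ≠ j → ∀ px py : ℝ,
          ¬(x i < px ∧ px < x i + w i ∧ y i < py ∧ py < y i + h i ∧
            x j < px ∧ px < x j + w j ∧ y j < py ∧ py < y j + h j))) →
      (1 - 2 * ε) * ∑ i ∈ S', p i ≤ ∑ i ∈ T, p i := by
  rintro S' hS'S ⟨x, y, hin, hdisj⟩
  have hpS'0 : 0 ≤ ∑ i ∈ S', p i := Finset.sum_nonneg fun i hi => hp i (hS'S hi)
  -- total area of S' is at most W*H
  have hareaS' : ∑ i ∈ S', w i * h i ≤ W * H :=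
    packed_area_le W H hW.le (by positivity) S' w h x y
      (fun i hi => ⟨(hwh i (hS'S hi)).1, (hwh i (hS'S hi)).2.2.1⟩) hin hdisj
  rcases hmax with rfl | ⟨j, hjST, hj⟩
  · -- T = S
    have h1 : ∑ i ∈ S', p i ≤ ∑ i ∈ T, p i :=
      Finset.sum_le_sum_of_subset_of_nonneg hS'S (fun i hi _ => hp i hi)
    nlinarith
  · -- T maximal, T ≠ S
    have hjS : j ∈ S := (Finset.mem_sdiff.1 hjST).1
    have haj : w j * h j ≤ ε * W * (ε * H) := by
      obtain ⟨hw1, hw2, hh1, hh2⟩ := hwh j hjS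
      exact mul_le_mul hw2 hh2 hh1.le (by positivity)
    have haT : (1 - 2 * ε) * (W * H) < ∑ i ∈ T, w i * h i := by nlinarith
    have hTne : T.Nonempty := by
      rcases T.eq_empty_or_nonempty with rfl | hne
      · simp only [Finset.sum_empty] at haT
        nlinarith [mul_pos hW hH]
      · exact hne
    obtain ⟨i₀, hi₀T, hmin⟩ := T.exists_min_image (fun i => p i / (w i * h i)) hTne
    have hai : ∀ i ∈ T, 0 < w i * h i := fun i hi =>
      mul_pos (hwh i (hTS hi)).1 (hwh i (hTS hi)).2.2.1
    set ρ : ℝ := p i₀ / (w i₀ * h i₀) with hρdef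
    have hρ0 : 0 ≤ ρ := div_nonneg (hp i₀ (hTS hi₀T)) (hai i₀ hi₀T).le
    have hlow : ∀ i ∈ T, ρ * (w i * h i) ≤ p i := fun i hi =>
      (le_div_iff₀ (hai i hi)).1 (hmin i hi)
    have hhigh : ∀ j' ∈ S \ T, p j' ≤ ρ * (w j' * h j') := by
      intro j' hj'
      have := hdens i₀ hi₀T j' hj'
      rw [hρdef, div_mul_eq_mul_div, le_div_iff₀ (hai i₀ hi₀T)]
      linarith
    -- split sums
    have hsplitP : ∑ i ∈ S' ∩ T, p i + ∑ i ∈ S' \ T, p i = ∑ i ∈ S', p i :=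
      Finset.sum_inter_add_sum_sdiff S' T p
    have hsplitPT : ∑ i ∈ T ∩ S', p i + ∑ i ∈ T \ S', p i = ∑ i ∈ T, p i :=
      Finset.sum_inter_add_sum_sdiff T S' p
    have hsplitA : ∑ i ∈ S' ∩ T, (w i * h i) + ∑ i ∈ S' \ T, (w i * h i)
        = ∑ i ∈ S', w i * h i := Finset.sum_inter_add_sum_sdiff S' T _
    have hsplitAT : ∑ i ∈ T ∩ S', (w i * h i) + ∑ i ∈ T \ S', (w i * h i)
        = ∑ i ∈ T, w i * h i := Finset.sum_inter_add_sum_sdiff T S' _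
    have hcommP : ∑ i ∈ S' ∩ T, p i = ∑ i ∈ T ∩ S', p i := by
      rw [Finset.inter_comm]
    have hcommA : ∑ i ∈ S' ∩ T, (w i * h i) = ∑ i ∈ T ∩ S', (w i * h i) := by
      rw [Finset.inter_comm]
    have hb : ∑ i ∈ S' \ T, p i ≤ ρ * ∑ i ∈ S' \ T, (w i * h i) := by
      rw [Finset.mul_sum]
      refine Finset.sum_le_sum fun i hi => hhigh i ?_
      rw [Finset.mem_sdiff] at hi ⊢
      exact ⟨hS'S hi.1, hi.2⟩
    have ha : ρ * ∑ i ∈ T \ S', (w i * h i) ≤ ∑ i ∈ T \ S', p i := by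
      rw [Finset.mul_sum]
      exact Finset.sum_le_sum fun i hi => hlow i (Finset.mem_sdiff.1 hi).1
    have hkey : ∑ i ∈ S', p i ≤ ∑ i ∈ T, p i
        + ρ * (∑ i ∈ S', w i * h i) - ρ * (∑ i ∈ T, w i * h i) := by
      have e1 : ρ * (∑ i ∈ S', w i * h i) - ρ * (∑ i ∈ T, w i * h i)
          = ρ * (∑ i ∈ S' \ T, (w i * h i)) - ρ * (∑ i ∈ T \ S', (w i * h i)) := by
        rw [← hsplitA, ← hsplitAT, hcommA]; ring
      linarith
    have hρlow : ρ * ∑ i ∈ T, (w i * h i) ≤ ∑ i ∈ T, p i := by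
      rw [Finset.mul_sum]
      exact Finset.sum_le_sum fun i hi => hlow i hi
    have hε' : (0:ℝ) ≤ 1 - 2 * ε := by linarith
    have h1 : ρ * ∑ i ∈ S', w i * h i ≤ ρ * (W * H) :=
      mul_le_mul_of_nonneg_left hareaS' hρ0
    have h2 : ρ * ((1 - 2 * ε) * (W * H)) ≤ ρ * ∑ i ∈ T, w i * h i :=
      mul_le_mul_of_nonneg_left haT.le hρ0
    have p1 := mul_le_mul_of_nonneg_left hkey hε'
    have p2 := mul_le_mul_of_nonneg_left h1 hε'
    have p4 := mul_le_mul_of_nonneg_left hρlow (show (0:ℝ) ≤ 2 * ε by linarith)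
    nlinarith [p1, p2, h2, p4]
end

section
/- Let J be a finite set of ε-small items feasible for the resource-augmented Vector-Max-GAP instance: J is partitioned into J_1,…,J_k with Σ_{i∈J_j} s_j(i) ≤ (1+ε)M_j for each machine j, and Σ_{i∈J} w_q(i) ≤ (1+ε)W_q for each q ∈ [d], where every item i ∈ J_j satisfies s_j(i) ≤ ε·M_j and w_q(i) ≤ ε·W_q for all q. Then, assuming 2ε(d+1) ≤ 1 and 0 < ε ≤ 1/2, there exists J' ⊆ J with p(J') ≥ (1 − 2(d+1)ε)·p(J) such that J' (with the induced machine assignment) satisfies Σ_{i∈J'∩J_j} s_j(i) ≤ M_j for all j and Σ_{i∈J'} w_q(i) ≤ W_q for all q. -/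
open Finset

private lemma build_aux (c : ℝ) (s p : ℕ → ℝ) (hp : ∀ i, 0 ≤ p i) :
    ∀ A : Finset ℕ, (∀ i ∈ A, 0 ≤ s i) → (∀ i ∈ A, s i ≤ c) →
      ∀ t : ℝ, 0 < t → t ≤ ∑ i ∈ A, s i →
      ∃ R, R ⊆ A ∧ t ≤ ∑ i ∈ R, s i ∧ (∑ i ∈ R, s i) ≤ t + c ∧
        ∀ j ∈ A \ R, (∑ i ∈ R, p i) * s j ≤ (∑ i ∈ R, s i) * p j := by
  intro A
  induction A using Finset.strongInduction with
  | _ A ih =>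
    intro hs hc t ht htA
    have hpos : ∃ i ∈ A, 0 < s i := by
      by_contra h
      push_neg at h
      have : ∑ i ∈ A, s i ≤ 0 := Finset.sum_nonpos fun i hi => h i hi
      linarith
    have hBne : (A.filter (fun j => 0 < s j)).Nonempty := by
      obtain ⟨i, hiA, hi⟩ := hpos
      exact ⟨i, Finset.mem_filter.2 ⟨hiA, hi⟩⟩
    obtain ⟨i, hiB, hmin⟩ :=
      Finset.exists_min_image (A.filter (fun j => 0 < s j)) (fun j => p j / s j) hBne
    have hiA : i ∈ A := (Finset.mem_filter.1 hiB).1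
    have hsi : 0 < s i := (Finset.mem_filter.1 hiB).2
    have key : ∀ j ∈ A, p i * s j ≤ s i * p j := by
      intro j hj
      rcases lt_or_ge 0 (s j) with hsj | hsj
      · have := hmin j (Finset.mem_filter.2 ⟨hj, hsj⟩)
        rw [div_le_div_iff₀ hsi hsj] at this
        linarith
      · have hsj0 : s j = 0 := le_antisymm hsj (hs j hj)
        rw [hsj0]
        have := mul_nonneg hsi.le (hp j)
        linarith
    rcases le_or_gt t (s i) with hcase | hcase
    · refine ⟨{i}, Finset.singleton_subset_iff.2 hiA, ?_, ?_, ?_⟩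
      · simpa using hcase
      · have := hc i hiA
        simp only [Finset.sum_singleton]
        linarith
      · intro j hj
        simpa using key j (Finset.mem_sdiff.1 hj).1
    · have hss : A.erase i ⊂ A := Finset.erase_ssubset hiA
      have hsum : ∑ x ∈ A.erase i, s x + s i = ∑ x ∈ A, s x :=
        Finset.sum_erase_add A s hiA
      obtain ⟨R', hR'sub, h1, h2, hinv⟩ :=
        ih (A.erase i) hss
          (fun j hj => hs j (Finset.mem_of_mem_erase hj))
          (fun j hj => hc j (Finset.mem_of_mem_erase hj))
          (t - s i) (by linarith) (by linarith)
      have hiR' : i ∉ R' := fun h => (Finset.mem_erase.1 (hR'sub h)).1 rfl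
      refine ⟨insert i R', ?_, ?_, ?_, ?_⟩
      · exact Finset.insert_subset hiA (hR'sub.trans (Finset.erase_subset i A))
      · rw [Finset.sum_insert hiR']; linarith
      · rw [Finset.sum_insert hiR']; linarith
      · intro j hj
        have hjA : j ∈ A := (Finset.mem_sdiff.1 hj).1
        have hjR : j ∉ insert i R' := (Finset.mem_sdiff.1 hj).2
        have hj' : j ∈ A.erase i \ R' := by
          rw [Finset.mem_sdiff, Finset.mem_erase]
          exact ⟨⟨fun h => hjR (h ▸ Finset.mem_insert_self i R'), hjA⟩,
            fun h => hjR (Finset.mem_insert_of_mem h)⟩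
        have h3 := hinv j hj'
        have hk := key j hjA
        rw [Finset.sum_insert hiR', Finset.sum_insert hiR']
        nlinarith [h3, hk]

private lemma trim_one (ε M : ℝ) (hε : 0 < ε) (hε2 : ε ≤ 1 / 2) (A : Finset ℕ)
    (s p : ℕ → ℝ) (hs : ∀ i ∈ A, 0 ≤ s i) (hp : ∀ i, 0 ≤ p i)
    (hsmall : ∀ i ∈ A, s i ≤ ε * M) (hfeas : ∑ i ∈ A, s i ≤ (1 + ε) * M) :
    ∃ T, T ⊆ A ∧ (∑ i ∈ T, s i) ≤ M ∧
      (1 - 2 * ε) * (∑ i ∈ A, p i) ≤ ∑ i ∈ T, p i := by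
  have hpA : 0 ≤ ∑ i ∈ A, p i := Finset.sum_nonneg fun i _ => hp i
  rcases le_or_gt (∑ i ∈ A, s i) M with h | h
  · exact ⟨A, Finset.Subset.rfl, h, by nlinarith⟩
  · have hM : 0 < M := by nlinarith
    obtain ⟨R, hRA, h1, h2, hinv⟩ := build_aux (ε * M) s p hp A hs hsmall
      (ε * M) (by positivity) (by nlinarith)
    have hsd : ∑ i ∈ A \ R, s i + ∑ i ∈ R, s i = ∑ i ∈ A, s i :=
      Finset.sum_sdiff hRA
    have hpd : ∑ i ∈ A \ R, p i + ∑ i ∈ R, p i = ∑ i ∈ A, p i :=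
      Finset.sum_sdiff hRA
    have h3 : ∑ j ∈ A \ R, (∑ i ∈ R, p i) * s j ≤ ∑ j ∈ A \ R, (∑ i ∈ R, s i) * p j :=
      Finset.sum_le_sum hinv
    rw [← Finset.mul_sum, ← Finset.mul_sum] at h3
    have hkey : (∑ i ∈ R, p i) * (∑ i ∈ A, s i) ≤ (∑ i ∈ R, s i) * (∑ i ∈ A, p i) := by
      calc (∑ i ∈ R, p i) * (∑ i ∈ A, s i)
          = (∑ i ∈ R, p i) * (∑ i ∈ A \ R, s i)
            + (∑ i ∈ R, p i) * (∑ i ∈ R, s i) := by rw [← hsd]; ring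
        _ ≤ (∑ i ∈ R, s i) * (∑ i ∈ A \ R, p i)
            + (∑ i ∈ R, s i) * (∑ i ∈ R, p i) :=
              add_le_add h3 (le_of_eq (mul_comm _ _))
        _ = (∑ i ∈ R, s i) * (∑ i ∈ A, p i) := by rw [← hpd]; ring
    have hpR : 0 ≤ ∑ i ∈ R, p i := Finset.sum_nonneg fun i _ => hp i
    refine ⟨A \ R, Finset.sdiff_subset, by linarith, ?_⟩
    nlinarith [hkey, mul_le_mul_of_nonneg_right h2 hpA,
      mul_nonneg (mul_nonneg (by linarith : (0:ℝ) ≤ 2 * ε) hpA)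
        (by linarith : (0:ℝ) ≤ (∑ i ∈ A, s i) - M)]

private lemma multitrim {d : ℕ} (ε : ℝ) (hε : 0 < ε) (hε2 : ε ≤ 1 / 2)
    (J : Finset ℕ) (w : Fin d → ℕ → ℝ) (p : ℕ → ℝ) (W : Fin d → ℝ)
    (hw : ∀ q i, 0 ≤ w q i) (hp : ∀ i, 0 ≤ p i)
    (hsmall : ∀ q, ∀ i ∈ J, w q i ≤ ε * W q)
    (hwfeas : ∀ q, ∑ i ∈ J, w q i ≤ (1 + ε) * W q)
    (Q : Finset (Fin d)) :
    ∀ A, A ⊆ J → ∃ B, B ⊆ A ∧ (∀ q ∈ Q, ∑ i ∈ B, w q i ≤ W q) ∧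
      (1 - 2 * ε) ^ Q.card * (∑ i ∈ A, p i) ≤ ∑ i ∈ B, p i := by
  induction Q using Finset.induction with
  | empty => intro A _; exact ⟨A, Finset.Subset.rfl, by simp, by simp⟩
  | @insert q Q hq ih =>
    intro A hA
    obtain ⟨B, hBA, hBQ, hBp⟩ := ih A hA
    have hBJ : B ⊆ J := hBA.trans hA
    obtain ⟨B', hB'B, hB'w, hB'p⟩ := trim_one ε (W q) hε hε2 B (w q) p
      (fun i _ => hw q i) hp (fun i hi => hsmall q i (hBJ hi))
      (le_trans (Finset.sum_le_sum_of_subset_of_nonneg hBJ fun i _ _ => hw q i)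
        (hwfeas q))
    refine ⟨B', hB'B.trans hBA, ?_, ?_⟩
    · intro q' hq'
      rcases Finset.mem_insert.1 hq' with rfl | hq'
      · exact hB'w
      · exact le_trans (Finset.sum_le_sum_of_subset_of_nonneg hB'B
          fun i _ _ => hw q' i) (hBQ q' hq')
    · rw [Finset.card_insert_of_notMem hq, pow_succ]
      have h1 : 0 ≤ 1 - 2 * ε := by linarith
      calc (1 - 2 * ε) ^ Q.card * (1 - 2 * ε) * (∑ i ∈ A, p i)
          = (1 - 2 * ε) * ((1 - 2 * ε) ^ Q.card * (∑ i ∈ A, p i)) := by ring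
        _ ≤ (1 - 2 * ε) * (∑ i ∈ B, p i) := mul_le_mul_of_nonneg_left hBp h1
        _ ≤ ∑ i ∈ B', p i := hB'p

/-- Trimming a resource-augmented assignment of ε-small items for Vector-Max-GAP yields a
feasible assignment losing at most a 2(d+1)ε fraction of profit. -/
theorem stmt12 (k d : ℕ) (ε : ℝ) (hε : 0 < ε) (hε2 : ε ≤ 1 / 2)
    (hεd : 2 * ε * ((d : ℝ) + 1) ≤ 1)
    (J : Finset ℕ) (Jm : Fin k → Finset ℕ)
    (hpart : ∀ i ∈ J, ∃! j, i ∈ Jm j) (hsub : ∀ j, Jm j ⊆ J)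
    (s : Fin k → ℕ → ℝ) (w : Fin d → ℕ → ℝ) (p : ℕ → ℝ)
    (M : Fin k → ℝ) (W : Fin d → ℝ)
    (hs : ∀ j i, 0 ≤ s j i) (hw : ∀ q i, 0 ≤ w q i) (hp : ∀ i, 0 ≤ p i)
    (hM : ∀ j, 0 ≤ M j) (hW : ∀ q, 0 ≤ W q)
    (hsmall_s : ∀ j, ∀ i ∈ Jm j, s j i ≤ ε * M j)
    (hsmall_w : ∀ q, ∀ i ∈ J, w q i ≤ ε * W q)
    (hfeas : ∀ j, ∑ i ∈ Jm j, s j i ≤ (1 + ε) * M j)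
    (hwfeas : ∀ q, ∑ i ∈ J, w q i ≤ (1 + ε) * W q) :
    ∃ J' ⊆ J, (1 - 2 * ((d : ℝ) + 1) * ε) * (∑ i ∈ J, p i) ≤ (∑ i ∈ J', p i) ∧
      (∀ j, ∑ i ∈ J' ∩ Jm j, s j i ≤ M j) ∧
      (∀ q, ∑ i ∈ J', w q i ≤ W q) := by
  classical
  -- pairwise disjointness of the machine classes
  have hdisj : ∀ a b : Fin k, a ≠ b → Disjoint (Jm a) (Jm b) := by
    intro a b hab
    rw [Finset.disjoint_left]
    intro i hia hib
    obtain ⟨j, _, huniq⟩ := hpart i (hsub a hia)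
    exact hab ((huniq a hia).trans (huniq b hib).symm)
  -- trim each machine
  have H : ∀ j : Fin k, ∃ T, T ⊆ Jm j ∧ (∑ i ∈ T, s j i) ≤ M j ∧
      (1 - 2 * ε) * (∑ i ∈ Jm j, p i) ≤ ∑ i ∈ T, p i := fun j =>
    trim_one ε (M j) hε hε2 (Jm j) (s j) p (fun i _ => hs j i) hp
      (hsmall_s j) (hfeas j)
  choose T hT1 hT2 hT3 using H
  set J₀ : Finset ℕ := Finset.univ.biUnion T with hJ₀
  have hJ₀J : J₀ ⊆ J := by
    intro i hi
    obtain ⟨j, _, hj⟩ := Finset.mem_biUnion.1 hi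
    exact hsub j (hT1 j hj)
  -- J equals the biUnion of the Jm
  have hJeq : J = Finset.univ.biUnion Jm := by
    ext i
    simp only [Finset.mem_biUnion, Finset.mem_univ, true_and]
    constructor
    · intro hi; obtain ⟨j, hj, _⟩ := hpart i hi; exact ⟨j, hj⟩
    · rintro ⟨j, hj⟩; exact hsub j hj
  have hdisjJm : ((Finset.univ : Finset (Fin k)) : Set (Fin k)).PairwiseDisjoint Jm :=
    fun a _ b _ hab => hdisj a b hab
  have hdisjT : ((Finset.univ : Finset (Fin k)) : Set (Fin k)).PairwiseDisjoint T :=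
    fun a _ b _ hab =>
      Finset.disjoint_of_subset_left (hT1 a)
        (Finset.disjoint_of_subset_right (hT1 b) (hdisj a b hab))
  have hJp : ∑ i ∈ J, p i = ∑ j, ∑ i ∈ Jm j, p i := by
    rw [hJeq]; exact Finset.sum_biUnion hdisjJm
  have hJ₀p : ∑ i ∈ J₀, p i = ∑ j, ∑ i ∈ T j, p i :=
    Finset.sum_biUnion hdisjT
  have hstep1 : (1 - 2 * ε) * (∑ i ∈ J, p i) ≤ ∑ i ∈ J₀, p i := by
    rw [hJp, hJ₀p, Finset.mul_sum]
    exact Finset.sum_le_sum fun j _ => hT3 j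
  -- J₀ ∩ Jm j ⊆ T j
  have hcap : ∀ j, J₀ ∩ Jm j ⊆ T j := by
    intro j i hi
    obtain ⟨hi0, hij⟩ := Finset.mem_inter.1 hi
    obtain ⟨j', _, hj'⟩ := Finset.mem_biUnion.1 hi0
    obtain ⟨j₀, _, huniq⟩ := hpart i (hsub j hij)
    have : j' = j := (huniq j' (hT1 j' hj')).trans (huniq j hij).symm
    exact this ▸ hj'
  -- trim all weight dimensions
  obtain ⟨B, hBJ₀, hBW, hBp⟩ := multitrim ε hε hε2 J w p W hw hp hsmall_w hwfeas
    Finset.univ J₀ hJ₀J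
  have hcard : (Finset.univ : Finset (Fin d)).card = d := by simp
  rw [hcard] at hBp
  refine ⟨B, hBJ₀.trans hJ₀J, ?_, ?_, fun q => hBW q (Finset.mem_univ q)⟩
  · -- profit bound
    have hpJ : 0 ≤ ∑ i ∈ J, p i := Finset.sum_nonneg fun i _ => hp i
    have hbern : 1 - 2 * ((d : ℝ) + 1) * ε ≤ (1 - 2 * ε) ^ (d + 1) := by
      have := one_add_mul_le_pow (a := -(2 * ε)) (by linarith) (d + 1)
      calc 1 - 2 * ((d : ℝ) + 1) * ε = 1 + ((d : ℕ) + 1 : ℕ)  * (-(2 * ε)) := by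
            push_cast; ring
        _ ≤ (1 + -(2 * ε)) ^ (d + 1) := this
        _ = (1 - 2 * ε) ^ (d + 1) := by ring_nf
    have hpow : (0:ℝ) ≤ (1 - 2 * ε) ^ d := pow_nonneg (by linarith) d
    calc (1 - 2 * ((d : ℝ) + 1) * ε) * (∑ i ∈ J, p i)
        ≤ (1 - 2 * ε) ^ (d + 1) * (∑ i ∈ J, p i) :=
          mul_le_mul_of_nonneg_right hbern hpJ
      _ = (1 - 2 * ε) ^ d * ((1 - 2 * ε) * (∑ i ∈ J, p i)) := by ring
      _ ≤ (1 - 2 * ε) ^ d * (∑ i ∈ J₀, p i) :=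
          mul_le_mul_of_nonneg_left hstep1 hpow
      _ ≤ ∑ i ∈ B, p i := hBp
  · -- machine constraints
    intro j
    have hsubj : B ∩ Jm j ⊆ T j :=
      (Finset.inter_subset_inter hBJ₀ (Finset.Subset.refl _)).trans (hcap j)
    exact le_trans (Finset.sum_le_sum_of_subset_of_nonneg hsubj
      fun i _ _ => hs j i) (hT2 j)
end

section
/- Let W, H > 0 and let S be a finite set of rectangles with widths w(i) ≤ w and heights h(i) ≤ h for all i, where w < W and h < H. If Σ_{i∈S} w(i)·h(i) ≤ (W − w)(H − h), then NFDH (Next Fit Decreasing Height) packs all rectangles of S interior-disjointly and axis-parallel into the W × H bin. -/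
namespace NFDH

noncomputable def pack (wi hi : ℕ → ℝ) (W : ℝ) : List ℕ → ℝ → ℝ → ℝ → List (ℕ × ℝ × ℝ)
  | [], _, _, _ => []
  | i :: t, x, y, sh =>
    if x + wi i ≤ W then (i, x, y) :: pack wi hi W t (x + wi i) y sh
    else (i, 0, y + sh) :: pack wi hi W t (wi i) (y + sh) (hi i)

noncomputable def ops (wi : ℕ → ℝ) (W : ℝ) : List ℕ → ℝ → List ℕ
  | [], _ => []
  | i :: t, x => if x + wi i ≤ W then ops wi W t (x + wi i) else i :: ops wi W t (wi i)

noncomputable def gam (wi hi : ℕ → ℝ) (W : ℝ) : List ℕ → ℝ → ℝ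
  | [], _ => 0
  | i :: t, x => if x + wi i ≤ W then gam wi hi W t (x + wi i) else hi i

variable {wi hi : ℕ → ℝ} {W w : ℝ}

theorem pack_map_fst (L : List ℕ) (x y sh : ℝ) :
    (pack wi hi W L x y sh).map Prod.fst = L := by
  induction L generalizing x y sh with
  | nil => simp [pack]
  | cons i t ih => simp only [pack]; split_ifs <;> simp [ih]

theorem ops_subset {L : List ℕ} {x : ℝ} : ∀ k ∈ ops wi W L x, k ∈ L := by
  induction L generalizing x with
  | nil => simp [ops]
  | cons i t ih =>
    intro k hk
    simp only [ops] at hk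
    split_ifs at hk with hf
    · exact List.mem_cons_of_mem _ (ih _ hk)
    · rcases List.mem_cons.1 hk with h | h
      · simp [h]
      · exact List.mem_cons_of_mem _ (ih _ h)

theorem ops_sum_nonneg {L : List ℕ} {x : ℝ} (hh : ∀ i ∈ L, 0 ≤ hi i) :
    0 ≤ ((ops wi W L x).map hi).sum := by
  apply List.sum_nonneg
  intro a ha
  rcases List.mem_map.1 ha with ⟨k, hk, rfl⟩
  exact hh k (ops_subset k hk)

theorem gam_le {L : List ℕ} {x c : ℝ} (hc : 0 ≤ c) (hL : ∀ j ∈ L, hi j ≤ c) :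
    gam wi hi W L x ≤ c := by
  induction L generalizing x with
  | nil => simpa [gam]
  | cons i t ih =>
    simp only [gam]; split_ifs with hf
    · exact ih fun j hj => hL j (List.mem_cons_of_mem _ hj)
    · exact hL i (List.mem_cons_self)

theorem pack_x (hwW : w < W) {L : List ℕ} (hw : ∀ i ∈ L, 0 < wi i ∧ wi i ≤ w)
    {x y sh : ℝ} (hx : 0 ≤ x) :
    ∀ p ∈ pack wi hi W L x y sh, 0 ≤ p.2.1 ∧ p.2.1 + wi p.1 ≤ W := by
  induction L generalizing x y sh with
  | nil => simp [pack]
  | cons i t ih =>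
    intro p hp
    simp only [pack] at hp
    have hwi := hw i (List.mem_cons_self)
    have hw' : ∀ j ∈ t, 0 < wi j ∧ wi j ≤ w := fun j hj => hw j (List.mem_cons_of_mem _ hj)
    split_ifs at hp with hf
    · rcases List.mem_cons.1 hp with rfl | hp
      · exact ⟨hx, hf⟩
      · exact ih hw' (by linarith [hwi.1]) p hp
    · rcases List.mem_cons.1 hp with rfl | hp
      · exact ⟨le_refl _, by simpa using hwi.2.trans hwW.le⟩
      · exact ih hw' (le_of_lt hwi.1) p hp

/-- Key area lemma: the total height of shelf openers is controlled by the total area. -/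
theorem ops_area (hwW : w < W) {L : List ℕ}
    (hsort : L.Pairwise (fun a b => hi b ≤ hi a))
    (hdim : ∀ i ∈ L, 0 ≤ wi i ∧ wi i ≤ w ∧ 0 ≤ hi i) {x : ℝ} :
    (W - w) * ((ops wi W L x).map hi).sum ≤
      x * gam wi hi W L x + (L.map (fun i => wi i * hi i)).sum := by
  induction L generalizing x with
  | nil => simp [ops, gam]
  | cons i t ih =>
    have hdi := hdim i (List.mem_cons_self)
    have hd' : ∀ j ∈ t, 0 ≤ wi j ∧ wi j ≤ w ∧ 0 ≤ hi j :=
      fun j hj => hdim j (List.mem_cons_of_mem _ hj)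
    have hs' : t.Pairwise (fun a b => hi b ≤ hi a) := (List.pairwise_cons.1 hsort).2
    have hle : ∀ j ∈ t, hi j ≤ hi i := (List.pairwise_cons.1 hsort).1
    simp only [ops, gam, List.map_cons, List.sum_cons]
    split_ifs with hf
    · have := ih hs' hd' (x := x + wi i)
      have hg : gam wi hi W t (x + wi i) ≤ hi i := gam_le hdi.2.2 hle
      nlinarith [hdi.1]
    · have := ih hs' hd' (x := wi i)
      have hg : gam wi hi W t (wi i) ≤ hi i := gam_le hdi.2.2 hle
      have hx : W - w ≤ x := by linarith [hdi.2.1, not_le.1 hf]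
      simp only [List.map_cons, List.sum_cons]
      nlinarith [hdi.1, hdi.2.2]

theorem pack_y {L : List ℕ} (hsort : L.Pairwise (fun a b => hi b ≤ hi a))
    {x y sh : ℝ} (hh : ∀ i ∈ L, 0 ≤ hi i ∧ hi i ≤ sh) (hsh : 0 ≤ sh) :
    ∀ p ∈ pack wi hi W L x y sh,
      y ≤ p.2.2 ∧ p.2.2 + hi p.1 ≤ y + sh + ((ops wi W L x).map hi).sum := by
  induction L generalizing x y sh with
  | nil => simp [pack]
  | cons i t ih =>
    intro p hp
    have hdi := hh i (List.mem_cons_self)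
    have hh' : ∀ j ∈ t, 0 ≤ hi j ∧ hi j ≤ sh := fun j hj => hh j (List.mem_cons_of_mem _ hj)
    have hhn : ∀ j ∈ t, 0 ≤ hi j := fun j hj => (hh' j hj).1
    have hle : ∀ j ∈ t, hi j ≤ hi i := (List.pairwise_cons.1 hsort).1
    have hs' : t.Pairwise (fun a b => hi b ≤ hi a) := (List.pairwise_cons.1 hsort).2
    simp only [pack, ops] at hp ⊢
    split_ifs at hp ⊢ with hf
    · have hsum : 0 ≤ ((ops wi W t (x + wi i)).map hi).sum := ops_sum_nonneg hhn
      rcases List.mem_cons.1 hp with rfl | hp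
      · exact ⟨le_refl _, by simpa using by linarith [hdi.2]⟩
      · have := ih hs' hh' hsh p hp
        constructor <;> linarith [this.1, this.2]
    · have hsum : 0 ≤ ((ops wi W t (wi i)).map hi).sum := ops_sum_nonneg hhn
      rcases List.mem_cons.1 hp with rfl | hp
      · refine ⟨?_, ?_⟩ <;> dsimp only <;>
          (try simp only [List.map_cons, List.sum_cons]) <;> linarith
      · have := ih hs' (fun j hj => ⟨(hh' j hj).1, hle j hj⟩) hdi.1 p hp
        simp only [List.map_cons, List.sum_cons]
        constructor <;> linarith [this.1, this.2]

theorem pack_region {L : List ℕ} (hsort : L.Pairwise (fun a b => hi b ≤ hi a))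
    {x y sh : ℝ} (hh : ∀ i ∈ L, 0 ≤ hi i ∧ hi i ≤ sh) (hw : ∀ i ∈ L, 0 ≤ wi i) :
    ∀ p ∈ pack wi hi W L x y sh,
      (x ≤ p.2.1 ∧ p.2.2 = y ∧ hi p.1 ≤ sh) ∨ (y + sh ≤ p.2.2) := by
  induction L generalizing x y sh with
  | nil => simp [pack]
  | cons i t ih =>
    intro p hp
    have hdi := hh i (List.mem_cons_self)
    have hwi := hw i (List.mem_cons_self)
    have hh' : ∀ j ∈ t, 0 ≤ hi j ∧ hi j ≤ sh := fun j hj => hh j (List.mem_cons_of_mem _ hj)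
    have hw' : ∀ j ∈ t, 0 ≤ wi j := fun j hj => hw j (List.mem_cons_of_mem _ hj)
    have hle : ∀ j ∈ t, hi j ≤ hi i := (List.pairwise_cons.1 hsort).1
    have hs' : t.Pairwise (fun a b => hi b ≤ hi a) := (List.pairwise_cons.1 hsort).2
    simp only [pack] at hp
    split_ifs at hp with hf
    · rcases List.mem_cons.1 hp with rfl | hp
      · exact Or.inl ⟨le_refl _, rfl, hdi.2⟩
      · rcases ih hs' hh' hw' p hp with ⟨h1, h2, h3⟩ | h
        · exact Or.inl ⟨by linarith, h2, h3⟩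
        · exact Or.inr h
    · rcases List.mem_cons.1 hp with rfl | hp
      · exact Or.inr (le_refl _)
      · rcases ih hs' (fun j hj => ⟨(hh' j hj).1, hle j hj⟩) hw' p hp with ⟨h1, h2, h3⟩ | h
        · exact Or.inr (by linarith [h2.ge, h2.le])
        · exact Or.inr (by linarith [hdi.1])

theorem pack_pairwise {L : List ℕ} (hsort : L.Pairwise (fun a b => hi b ≤ hi a))
    {x y sh : ℝ} (hh : ∀ i ∈ L, 0 ≤ hi i ∧ hi i ≤ sh) (hw : ∀ i ∈ L, 0 ≤ wi i) :
    (pack wi hi W L x y sh).Pairwise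
      (fun p q => p.2.1 + wi p.1 ≤ q.2.1 ∨ p.2.2 + hi p.1 ≤ q.2.2) := by
  induction L generalizing x y sh with
  | nil => simp [pack]
  | cons i t ih =>
    have hdi := hh i (List.mem_cons_self)
    have hwi := hw i (List.mem_cons_self)
    have hh' : ∀ j ∈ t, 0 ≤ hi j ∧ hi j ≤ sh := fun j hj => hh j (List.mem_cons_of_mem _ hj)
    have hw' : ∀ j ∈ t, 0 ≤ wi j := fun j hj => hw j (List.mem_cons_of_mem _ hj)
    have hle : ∀ j ∈ t, hi j ≤ hi i := (List.pairwise_cons.1 hsort).1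
    have hs' : t.Pairwise (fun a b => hi b ≤ hi a) := (List.pairwise_cons.1 hsort).2
    simp only [pack]
    split_ifs with hf
    · refine List.pairwise_cons.2 ⟨?_, ih hs' hh' hw'⟩
      intro q hq
      rcases pack_region hs' hh' hw' q hq with ⟨h1, h2, h3⟩ | h
      · exact Or.inl (by simpa using h1)
      · exact Or.inr (by simp; linarith [hdi.2])
    · refine List.pairwise_cons.2 ⟨?_, ih hs' (fun j hj => ⟨(hh' j hj).1, hle j hj⟩) hw'⟩
      intro q hq
      rcases pack_region hs' (fun j hj => ⟨(hh' j hj).1, hle j hj⟩) hw' q hq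
        with ⟨h1, h2, h3⟩ | h
      · exact Or.inl (by simpa using h1)
      · exact Or.inr (by simpa using h)

end NFDH

/-- NFDH packing guarantee: if all rectangles have width ≤ w < W, height ≤ h < H and total
area at most (W-w)(H-h), then they can all be packed interior-disjointly into a W×H bin. -/


theorem stmt18 (W H w h : ℝ) (hW : 0 < W) (hH : 0 < H)
    (hwW : w < W) (hhH : h < H)
    (S : Finset ℕ) (wi hi : ℕ → ℝ)
    (hdim : ∀ i ∈ S, 0 < wi i ∧ wi i ≤ w ∧ 0 < hi i ∧ hi i ≤ h)
    (harea : ∑ i ∈ S, wi i * hi i ≤ (W - w) * (H - h)) :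
    ∃ x y : ℕ → ℝ,
      (∀ i ∈ S, 0 ≤ x i ∧ x i + wi i ≤ W ∧ 0 ≤ y i ∧ y i + hi i ≤ H) ∧
      (∀ i ∈ S, ∀ j ∈ S, i ≠ j → ∀ px py : ℝ,
        ¬(x i < px ∧ px < x i + wi i ∧ y i < py ∧ py < y i + hi i ∧
          x j < px ∧ px < x j + wi j ∧ y j < py ∧ py < y j + hi j)) := by
  classical
  set le : ℕ → ℕ → Bool := fun a b => decide (hi b ≤ hi a) with hle_def
  have hperm : (S.toList.mergeSort le).Perm S.toList := List.mergeSort_perm _ _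
  have hmemL : ∀ i, i ∈ S.toList.mergeSort le ↔ i ∈ S := by
    intro i; rw [hperm.mem_iff, Finset.mem_toList]
  have hsorted : (S.toList.mergeSort le).Pairwise (fun a b => hi b ≤ hi a) := by
    have := List.pairwise_mergeSort (le := le)
      (fun a b c hab hbc => by
        simp only [hle_def, decide_eq_true_eq] at *; exact hbc.trans hab)
      (fun a b => by simp only [hle_def, Bool.or_eq_true, decide_eq_true_eq]; exact le_total _ _)
      S.toList
    exact this.imp (fun hab => by simpa [hle_def] using hab)
  have hsum : ((S.toList.mergeSort le).map (fun i => wi i * hi i)).sum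
      = ∑ i ∈ S, wi i * hi i := by
    rw [(hperm.map _).sum_eq, Finset.sum_map_toList]
  obtain hnil | ⟨i0, t, hLt⟩ : S.toList.mergeSort le = [] ∨
      ∃ i0 t, S.toList.mergeSort le = i0 :: t :=
    match S.toList.mergeSort le with
    | [] => Or.inl rfl
    | a :: l => Or.inr ⟨a, l, rfl⟩
  · refine ⟨fun _ => 0, fun _ => 0, fun i hiS => absurd ((hmemL i).2 hiS) (by simp [hnil]),
      fun i hiS => absurd ((hmemL i).2 hiS) (by simp [hnil])⟩
  rw [hLt] at hmemL hsorted hsum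
  have hd0 := hdim i0 ((hmemL i0).1 (List.mem_cons_self))
  have hdt : ∀ j ∈ t, 0 < wi j ∧ wi j ≤ w ∧ 0 < hi j ∧ hi j ≤ h :=
    fun j hj => hdim j ((hmemL j).1 (List.mem_cons_of_mem _ hj))
  have hle0 : ∀ j ∈ t, hi j ≤ hi i0 := (List.pairwise_cons.1 hsorted).1
  have hs' : t.Pairwise (fun a b => hi b ≤ hi a) := (List.pairwise_cons.1 hsorted).2
  set P : List (ℕ × ℝ × ℝ) :=
    (i0, (0:ℝ), (0:ℝ)) :: NFDH.pack wi hi W t (wi i0) 0 (hi i0) with hP_def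
  -- total shelf-opener height bound
  have hops : ((NFDH.ops wi W t (wi i0)).map hi).sum ≤ H - h := by
    have h1 := NFDH.ops_area (w := w) hwW hs'
      (fun j hj => ⟨(hdt j hj).1.le, (hdt j hj).2.1, (hdt j hj).2.2.1.le⟩) (x := wi i0)
    have h2 : NFDH.gam wi hi W t (wi i0) ≤ hi i0 := NFDH.gam_le hd0.2.2.1.le hle0
    have h3 : (t.map (fun i => wi i * hi i)).sum + wi i0 * hi i0 ≤ (W - w) * (H - h) := by
      simp only [List.map_cons, List.sum_cons] at hsum
      linarith [hsum ▸ harea]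
    nlinarith [hd0.1, hd0.2.2.1]
  -- containment
  have hcont : ∀ p ∈ P, 0 ≤ p.2.1 ∧ p.2.1 + wi p.1 ≤ W ∧ 0 ≤ p.2.2 ∧ p.2.2 + hi p.1 ≤ H := by
    intro p hp
    rcases List.mem_cons.1 hp with rfl | hp
    · refine ⟨le_refl _, ?_, le_refl _, ?_⟩ <;> dsimp only <;> linarith [hd0.2.1, hd0.2.2.2]
    · have hx := NFDH.pack_x hwW (fun j hj => ⟨(hdt j hj).1, (hdt j hj).2.1⟩)
        (le_of_lt hd0.1) p hp
      have hy := NFDH.pack_y hs'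
        (fun j hj => ⟨(hdt j hj).2.2.1.le, hle0 j hj⟩) hd0.2.2.1.le p hp
      refine ⟨hx.1, hx.2, by linarith [hy.1], ?_⟩
      have := hy.2
      have : p.2.2 + hi p.1 ≤ 0 + hi i0 + ((NFDH.ops wi W t (wi i0)).map hi).sum := this
      linarith [hd0.2.2.2]
  -- pairwise separation
  have hpw : P.Pairwise
      (fun p q => p.2.1 + wi p.1 ≤ q.2.1 ∨ p.2.2 + hi p.1 ≤ q.2.2) := by
    refine List.pairwise_cons.2 ⟨?_, NFDH.pack_pairwise hs'
      (fun j hj => ⟨(hdt j hj).2.2.1.le, hle0 j hj⟩) (fun j hj => (hdt j hj).1.le)⟩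
    intro q hq
    rcases NFDH.pack_region hs' (fun j hj => ⟨(hdt j hj).2.2.1.le, hle0 j hj⟩)
      (fun j hj => (hdt j hj).1.le) q hq with ⟨h1, h2, h3⟩ | hq2
    · exact Or.inl (by dsimp only; linarith)
    · exact Or.inr (by dsimp only; linarith)
  have hfst : P.map Prod.fst = i0 :: t := by
    simp [hP_def, NFDH.pack_map_fst]
  -- positions
  set f : ℕ → ℕ × ℝ × ℝ := fun i => (P.find? (fun p => p.1 == i)).getD (i, 0, 0) with hf_def
  have hfind : ∀ i ∈ S, f i ∈ P ∧ (f i).1 = i := by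
    intro i hiS
    have hiL : i ∈ P.map Prod.fst := by rw [hfst]; exact (hmemL i).2 hiS
    rcases List.mem_map.1 hiL with ⟨p, hpP, hpfst⟩
    have hsome : (P.find? (fun p => p.1 == i)).isSome := by
      rw [List.find?_isSome]; exact ⟨p, hpP, by simp [hpfst]⟩
    rcases Option.isSome_iff_exists.1 hsome with ⟨p0, hp0⟩
    have h1 : f i = p0 := by rw [hf_def]; simp [hp0]
    refine ⟨h1 ▸ List.mem_of_find?_eq_some hp0, ?_⟩
    have := List.find?_some hp0
    rw [h1]; exact by simpa using this
  refine ⟨fun i => (f i).2.1, fun i => (f i).2.2, ?_, ?_⟩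
  · intro i hiS
    obtain ⟨hmem, hfst1⟩ := hfind i hiS
    have := hcont _ hmem
    rw [hfst1] at this
    exact this
  · intro i hiS j hjS hij px py hcontr
    obtain ⟨hmi, hfi⟩ := hfind i hiS
    obtain ⟨hmj, hfj⟩ := hfind j hjS
    have hne : f i ≠ f j := fun hEq => hij (hfi ▸ hfj ▸ congrArg Prod.fst hEq)
    have hsym : ∀ ⦃p⦄, p ∈ P → ∀ ⦃q⦄, q ∈ P → p ≠ q →
        ((p.2.1 + wi p.1 ≤ q.2.1 ∨ p.2.2 + hi p.1 ≤ q.2.2) ∨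
         (q.2.1 + wi q.1 ≤ p.2.1 ∨ q.2.2 + hi q.1 ≤ p.2.2)) :=
      by
        haveI : Std.Symm (fun p q : ℕ × ℝ × ℝ =>
            ((p.2.1 + wi p.1 ≤ q.2.1 ∨ p.2.2 + hi p.1 ≤ q.2.2) ∨
             (q.2.1 + wi q.1 ≤ p.2.1 ∨ q.2.2 + hi q.1 ≤ p.2.2))) := ⟨fun _ _ hr => hr.symm⟩
        exact List.Pairwise.forall (hpw.imp fun hr => Or.inl hr)
    have := hsym hmi hmj hne
    rw [hfi, hfj] at this
    rcases this with (h1 | h1) | (h1 | h1) <;>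
      [linarith [hcontr.1, hcontr.2.1, hcontr.2.2.2.2.1, hcontr.2.2.2.2.2.1];
       linarith [hcontr.2.2.1, hcontr.2.2.2.1, hcontr.2.2.2.2.2.2.1, hcontr.2.2.2.2.2.2.2];
       linarith [hcontr.1, hcontr.2.1, hcontr.2.2.2.2.1, hcontr.2.2.2.2.2.1];
       linarith [hcontr.2.2.1, hcontr.2.2.2.1, hcontr.2.2.2.2.2.2.1, hcontr.2.2.2.2.2.2.2]]
end
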